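/- With R, p, e₀, φ and the ideals σ_n(φ, 𝔟, μ) as in the context, let 𝔞 ⊆ R be an ideal and λ ≥ 1 a rational number. Then for every n ≥ 0 one has 𝔞 · σ_n(φ, 𝔞, λ − 1) ⊆ σ_n(φ, 𝔞, λ). -/

import Mathlib

/-- The filtration `σ_n(φ, 𝔟, μ)`: `σ_0 = R` and
`σ_n = ⨆ (e ≥ 1), span (φ^e '' (𝔟^⌈μ(p^{e·e₀}-1)⌉ · σ_{n-1}))`. -/
def sigmaN {R : Type*} [CommRing R] (φ : R → R) (p e₀ : ℕ) (b : Ideal R) (μ : ℚ) :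
    ℕ → Ideal R
  | 0 => ⊤
  | n + 1 => ⨆ e : ℕ, ⨆ _ : 1 ≤ e,
      Ideal.span (φ^[e] ''
        ((b ^ (⌈μ * ((p ^ (e * e₀) : ℕ) - 1 : ℚ)⌉).toNat * sigmaN φ p e₀ b μ n : Ideal R) : Set R))

section Aux

variable {R : Type*} [CommRing R]

theorem sigma_iter_add (φ : R → R) (hadd : ∀ x y : R, φ (x + y) = φ x + φ y) (e : ℕ) :
    ∀ x y : R, φ^[e] (x + y) = φ^[e] x + φ^[e] y := by
  induction e with
  | zero => simp
  | succ e ih =>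
    intro x y
    rw [Function.iterate_succ_apply, Function.iterate_succ_apply,
      Function.iterate_succ_apply, hadd, ih]

theorem sigma_iter_sl (φ : R → R) (p e₀ : ℕ)
    (hsl : ∀ r x : R, φ (r ^ p ^ e₀ * x) = r * φ x) (e : ℕ) (r : R) :
    ∀ x : R, φ^[e] (r ^ p ^ (e * e₀) * x) = r * φ^[e] x := by
  induction e with
  | zero => simp
  | succ e ih =>
    intro x
    have hexp : r ^ p ^ ((e + 1) * e₀) * x = (r ^ p ^ (e * e₀)) ^ p ^ e₀ * x := by
      rw [← pow_mul, ← pow_add, Nat.succ_mul]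
    rw [Function.iterate_succ_apply, Function.iterate_succ_apply, hexp, hsl, ih]

theorem sigma_key (φ : R → R) (e : ℕ) (r : R) (q : ℕ)
    (hr : ∀ x : R, φ^[e] (r ^ q * x) = r * φ^[e] x) (I J : Ideal R)
    (h : ∀ x ∈ I, r ^ q * x ∈ J) :
    ∀ s ∈ Ideal.span (φ^[e] '' (I : Set R)), r * s ∈ Ideal.span (φ^[e] '' (J : Set R)) := by
  intro s hs
  induction hs using Submodule.span_induction with
  | mem x hx =>
    obtain ⟨y, hy, rfl⟩ := hx
    rw [← hr]
    exact Ideal.subset_span ⟨_, h y hy, rfl⟩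
  | zero => simp
  | add x y _ _ hx hy => rw [mul_add]; exact Ideal.add_mem _ hx hy
  | smul c x _ hx =>
    rw [smul_eq_mul, mul_left_comm]
    exact Ideal.mul_mem_left _ c hx

end Aux

theorem sigma_ceil_arith (lam : ℚ) (hlam : 1 ≤ lam) (q : ℕ) (hq : 1 ≤ q) :
    q + (⌈(lam - 1) * ((q : ℚ) - 1)⌉).toNat = (⌈lam * ((q : ℚ) - 1)⌉).toNat + 1 := by
  obtain ⟨m, rfl⟩ : ∃ m, q = m + 1 := ⟨q - 1, by omega⟩
  have h1 : ((m + 1 : ℕ) : ℚ) - 1 = (m : ℚ) := by push_cast; ring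
  rw [h1]
  have h2 : lam * (m : ℚ) = (lam - 1) * m + m := by ring
  rw [h2, Int.ceil_add_natCast]
  have h3 : 0 ≤ ⌈(lam - 1) * (m : ℚ)⌉ :=
    Int.ceil_nonneg (mul_nonneg (by linarith) (by positivity))
  omega

/-- The filtration-level form of Proposition 1.2(iv): for `λ ≥ 1`,
`𝔞 · σ_n(φ, 𝔞, λ - 1) ⊆ σ_n(φ, 𝔞, λ)` for all `n`. -/
theorem mul_sigmaN_le {R : Type*} [CommRing R] (p : ℕ) (hp : p.Prime)
    (e₀ : ℕ) (he₀ : 0 < e₀) (φ : R → R)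
    (hadd : ∀ x y : R, φ (x + y) = φ x + φ y)
    (hsl : ∀ r x : R, φ (r ^ p ^ e₀ * x) = r * φ x)
    (a : Ideal R) (lam : ℚ) (hlam : 1 ≤ lam) (n : ℕ) :
    a * sigmaN φ p e₀ a (lam - 1) n ≤ sigmaN φ p e₀ a lam n := by
  induction n with
  | zero => exact le_top
  | succ n ih =>
    simp only [sigmaN]
    rw [← smul_eq_mul, Submodule.smul_iSup]
    refine iSup_le fun e => ?_
    rw [Submodule.smul_iSup]
    refine iSup_le fun he => ?_
    refine le_iSup_of_le e (le_iSup_of_le he ?_)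
    rw [smul_eq_mul]
    set q : ℕ := p ^ (e * e₀) with hqdef
    have hq : 1 ≤ q := Nat.one_le_pow _ _ hp.pos
    set k' : ℕ := (⌈(lam - 1) * ((q : ℚ) - 1)⌉).toNat with hk'
    set kl : ℕ := (⌈lam * ((q : ℚ) - 1)⌉).toNat with hkl
    have harith : q + k' = kl + 1 := sigma_ceil_arith lam hlam q hq
    set σ' := sigmaN φ p e₀ a (lam - 1) n with hσ'
    set σ := sigmaN φ p e₀ a lam n with hσ
    have hincl : a ^ q * (a ^ k' * σ') ≤ a ^ kl * σ := by
      calc a ^ q * (a ^ k' * σ') = a ^ (q + k') * σ' := by rw [← mul_assoc, ← pow_add]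
        _ = a ^ kl * (a * σ') := by rw [harith, pow_succ, mul_assoc]
        _ ≤ a ^ kl * σ := Ideal.mul_mono_right ih
    refine Ideal.mul_le.2 fun r hr s hs => ?_
    exact sigma_key φ e r q (sigma_iter_sl φ p e₀ hsl e r) _ _
      (fun x hx => hincl (Ideal.mul_mem_mul (Ideal.pow_mem_pow hr q) hx)) s hs
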